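/- In the differential polynomial ring F{x} in one variable over a field of characteristic zero, if f is a differential polynomial with E(f) = 0, where E is the Euler operator, then f = c + D(g) for some constant c and some differential polynomial g; in particular if f has no constant term then f lies in the image of D. -/

import Mathlib

open MvPolynomial

/-- The derivation `D` on `F{x}`, sending `x^{(k)} = X k` to `x^{(k+1)} = X (k+1)`. -/
noncomputable def Dx (F : Type*) [Field F] :
    Derivation F (MvPolynomial ℕ F) (MvPolynomial ℕ F) :=
  mkDerivation F fun k => X (k + 1)

/-- The Euler operator `E(f) = Σ_{i≥0} (−D)^i (∂f/∂x^{(i)})`. -/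
noncomputable def eulerOp (F : Type*) [Field F] (f : MvPolynomial ℕ F) : MvPolynomial ℕ F :=
  ∑ᶠ i : ℕ, ((-1 : ℤ) ^ i) • ((⇑(Dx F))^[i] (pderiv i f))

namespace GD

variable {F : Type*} [Field F]

lemma iter_eq (i : ℕ) (p : MvPolynomial ℕ F) :
    (⇑(Dx F))^[i] p = ((Dx F).toLinearMap ^ i) p := by
  rw [Module.End.pow_apply]; rfl

lemma zsmul_eq (i : ℕ) (p : MvPolynomial ℕ F) :
    ((-1 : ℤ) ^ i) • p = ((-1 : F) ^ i) • p := by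
  rw [← Int.cast_smul_eq_zsmul F]; norm_cast

lemma degree_add (a b : ℕ →₀ ℕ) : (a + b).degree = a.degree + b.degree := by
  simp only [Finsupp.degree_eq_weight_one]; exact map_add _ a b

lemma degree_single (j : ℕ) : (Finsupp.single j 1 : ℕ →₀ ℕ).degree = 1 := by
  rw [Finsupp.degree_apply, Finsupp.support_single_ne_zero _ one_ne_zero, Finset.sum_singleton,
    Finsupp.single_eq_same]

lemma sub_single_add {s : ℕ →₀ ℕ} {i : ℕ} (h : s i ≠ 0) :
    s - Finsupp.single i 1 + Finsupp.single i 1 = s := by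
  ext a
  simp only [Finsupp.add_apply, Finsupp.tsub_apply, Finsupp.single_apply]
  split_ifs with hai
  · subst hai; omega
  · omega

lemma degree_of_mem_support {p : MvPolynomial ℕ F} {n : ℕ}
    (hp : p ∈ homogeneousSubmodule ℕ F n) {s : ℕ →₀ ℕ} (hs : s ∈ p.support) :
    s.degree = n := by
  rw [mem_homogeneousSubmodule] at hp
  have := hp (MvPolynomial.mem_support_iff.mp hs)
  rw [Finsupp.degree_eq_weight_one]; exact this

lemma isHom_pderiv {p : MvPolynomial ℕ F} {n : ℕ} (i : ℕ)
    (hp : p ∈ homogeneousSubmodule ℕ F (n + 1)) :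
    pderiv i p ∈ homogeneousSubmodule ℕ F n := by
  have : pderiv i p = ∑ s ∈ p.support, pderiv i (monomial s (coeff s p)) := by
    conv_lhs => rw [p.as_sum]
    exact map_sum _ _ _
  rw [this]
  refine Submodule.sum_mem _ fun s hs => ?_
  rw [pderiv_monomial]
  by_cases h : s i = 0
  · simp [h]
  · rw [mem_homogeneousSubmodule]
    refine isHomogeneous_monomial _ ?_
    have h1 : (s - Finsupp.single i 1 + Finsupp.single i 1).degree = n + 1 := by
      rw [sub_single_add h]; exact degree_of_mem_support hp hs
    rw [degree_add, degree_single] at h1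
    omega

lemma isHom_Dx {p : MvPolynomial ℕ F} {m : ℕ}
    (hp : p ∈ homogeneousSubmodule ℕ F m) :
    Dx F p ∈ homogeneousSubmodule ℕ F m := by
  have : Dx F p = ∑ s ∈ p.support, Dx F (monomial s (coeff s p)) := by
    conv_lhs => rw [p.as_sum]
    exact map_sum _ _ _
  rw [this]
  refine Submodule.sum_mem _ fun s hs => ?_
  rw [Dx, mkDerivation_monomial]
  refine Submodule.smul_mem _ _ ?_
  rw [Finsupp.sum]
  refine Submodule.sum_mem _ fun i hi => ?_
  have hsi : s i ≠ 0 := Finsupp.mem_support_iff.mp hi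
  rw [smul_eq_mul, X, monomial_mul, mul_one]
  rw [mem_homogeneousSubmodule]
  refine isHomogeneous_monomial _ ?_
  have h1 : (s - Finsupp.single i 1 + Finsupp.single i 1).degree = m := by
    rw [sub_single_add hsi]; exact degree_of_mem_support hp hs
  rw [degree_add, degree_single] at h1
  rw [degree_add, degree_single]
  omega

lemma isHom_DxPow {m : ℕ} (i : ℕ) {p : MvPolynomial ℕ F}
    (hp : p ∈ homogeneousSubmodule ℕ F m) :
    ((Dx F).toLinearMap ^ i) p ∈ homogeneousSubmodule ℕ F m := by
  induction i generalizing p with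
  | zero => simpa using hp
  | succ i ih =>
    rw [pow_succ, Module.End.mul_apply]
    exact ih (isHom_Dx hp)

lemma X_mul_pderiv_monomial (i : ℕ) (s : ℕ →₀ ℕ) (c : F) :
    X i * pderiv i (monomial s c) = monomial s (c * (s i : F)) := by
  rw [pderiv_monomial]
  by_cases h : s i = 0
  · simp [h]
  · rw [X, monomial_mul, one_mul, add_comm, sub_single_add h]

lemma euler {p : MvPolynomial ℕ F} {n N : ℕ}
    (hp : p ∈ homogeneousSubmodule ℕ F n)
    (hN : ∀ d ∈ p.support, ∀ j ∈ d.support, j < N) :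
    ∑ i ∈ Finset.range N, X i * pderiv i p = (n : F) • p := by
  have key : ∀ i, X i * pderiv i p
      = ∑ s ∈ p.support, monomial s (coeff s p * (s i : F)) := by
    intro i
    conv_lhs => rw [p.as_sum, map_sum (pderiv i), Finset.mul_sum]
    exact Finset.sum_congr rfl fun s _ => X_mul_pderiv_monomial i s _
  calc ∑ i ∈ Finset.range N, X i * pderiv i p
      = ∑ s ∈ p.support, ∑ i ∈ Finset.range N, monomial s (coeff s p * (s i : F)) := by
        rw [Finset.sum_comm]
        exact Finset.sum_congr rfl fun i _ => key i
    _ = (n : F) • p := by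
        conv_rhs => rw [p.as_sum, Finset.smul_sum]
        refine Finset.sum_congr rfl fun s hs => ?_
        rw [← map_sum (monomial s), ← Finset.mul_sum]
        have hsum : ∑ i ∈ Finset.range N, (s i : F) = (n : F) := by
          have h1 : ∑ i ∈ Finset.range N, s i = s.degree := by
            rw [Finsupp.degree_apply]
            refine (Finset.sum_subset (fun j hj => Finset.mem_range.mpr
              (hN s hs j hj)) fun j _ hj => ?_).symm
            simpa using Finsupp.notMem_support_iff.mp hj
          rw [← Nat.cast_sum, h1, degree_of_mem_support hp hs]
        rw [hsum, smul_monomial, smul_eq_mul, mul_comm]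

lemma mem_S (g : MvPolynomial ℕ F) :
    Dx F g ∈ LinearMap.range (Dx F).toLinearMap := ⟨g, rfl⟩

lemma modD (i : ℕ) (h : MvPolynomial ℕ F) :
    X i * h - ((-1 : ℤ) ^ i) • (X 0 * (⇑(Dx F))^[i] h)
      ∈ LinearMap.range (Dx F).toLinearMap := by
  induction i generalizing h with
  | zero => simp
  | succ i ih =>
    have key : X (i + 1) * h = Dx F (X i * h) - X i * Dx F h := by
      rw [Derivation.leibniz, smul_eq_mul, smul_eq_mul]
      rw [show Dx F (X i) = X (i + 1) by rw [Dx, mkDerivation_X]]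
      ring
    have expr : X (i + 1) * h - ((-1 : ℤ) ^ (i + 1)) • (X 0 * (⇑(Dx F))^[i + 1] h)
        = Dx F (X i * h)
          - (X i * Dx F h - ((-1 : ℤ) ^ i) • (X 0 * (⇑(Dx F))^[i] (Dx F h))) := by
      rw [Function.iterate_succ_apply, key, pow_succ, mul_smul]
      rw [show ((-1 : ℤ)) • (X 0 * (⇑(Dx F))^[i] (Dx F h))
        = -(X 0 * (⇑(Dx F))^[i] (Dx F h)) from neg_one_zsmul _, smul_neg]
      abel
    rw [expr]
    exact Submodule.sub_mem _ (mem_S _) (ih (Dx F h))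

/-- The truncated Euler operator, as a linear map. -/
noncomputable def EN (F : Type*) [Field F] (N : ℕ) :
    MvPolynomial ℕ F →ₗ[F] MvPolynomial ℕ F :=
  ∑ i ∈ Finset.range N, ((-1 : F) ^ i) •
    (((Dx F).toLinearMap ^ i) ∘ₗ (pderiv (R := F) (σ := ℕ) i).toLinearMap)

lemma EN_apply (N : ℕ) (f : MvPolynomial ℕ F) :
    EN F N f = ∑ i ∈ Finset.range N, ((-1 : ℤ) ^ i) • ((⇑(Dx F))^[i] (pderiv i f)) := by
  rw [EN, LinearMap.sum_apply]
  refine Finset.sum_congr rfl fun i _ => ?_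
  rw [LinearMap.smul_apply, LinearMap.comp_apply, iter_eq, zsmul_eq]
  rfl

lemma EN_hom (N m : ℕ) {p : MvPolynomial ℕ F}
    (hp : p ∈ homogeneousSubmodule ℕ F (m + 1)) :
    EN F N p ∈ homogeneousSubmodule ℕ F m := by
  rw [EN, LinearMap.sum_apply]
  refine Submodule.sum_mem _ fun i _ => ?_
  rw [LinearMap.smul_apply, LinearMap.comp_apply]
  exact Submodule.smul_mem _ _ (isHom_DxPow i (isHom_pderiv i hp))

end GD

/-- Gel'fand–Dikii exactness: if `E(f) = 0` then `f = c + D(g)` for some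
constant `c` and some `g`; in particular if `f` has no constant term then `f ∈ im D`. -/
theorem stmt9 (F : Type*) [Field F] [CharZero F] (f : MvPolynomial ℕ F)
    (hf : eulerOp F f = 0) :
    (∃ (c : F) (g : MvPolynomial ℕ F), f = C c + Dx F g) ∧
    (constantCoeff f = 0 → ∃ g : MvPolynomial ℕ F, f = Dx F g) := by
  classical
  set S := LinearMap.range (Dx F).toLinearMap with hS
  set N := f.vars.sup id + 1 with hNdef
  set T := f.totalDegree with hT
  set fn : ℕ → MvPolynomial ℕ F := fun n => homogeneousComponent n f with hfn
  have hfnmem : ∀ n, fn n ∈ homogeneousSubmodule ℕ F n :=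
    fun n => homogeneousComponent_mem n f
  have hvars : ∀ j ∈ f.vars, j < N :=
    fun j hj => Nat.lt_succ_of_le (Finset.le_sup (f := id) hj)
  have hN2 : ∀ n, ∀ d ∈ (fn n).support, ∀ j ∈ d.support, j < N := by
    intro n d hd j hj
    apply hvars
    rw [mem_vars]
    refine ⟨d, ?_, hj⟩
    rw [mem_support_iff] at hd ⊢
    intro h0
    apply hd
    rw [hfn]
    rw [coeff_homogeneousComponent]
    split_ifs <;> simp [h0]
  have hEf : eulerOp F f = GD.EN F N f := by
    rw [eulerOp, GD.EN_apply]
    refine finsum_eq_sum_of_support_subset _ ?_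
    intro i hi
    simp only [Function.mem_support] at hi
    by_contra hiN
    apply hi
    have hz : pderiv i f = 0 := by
      apply pderiv_eq_zero_of_notMem_vars
      intro hmem
      exact hiN (Finset.mem_coe.mpr (Finset.mem_range.mpr (hvars i hmem)))
    rw [hz, GD.iter_eq, map_zero, smul_zero]
  have hsum : f = ∑ n ∈ Finset.range (T + 1), fn n := (sum_homogeneousComponent f).symm
  have hENsum : GD.EN F N f = ∑ n ∈ Finset.range (T + 1), GD.EN F N (fn n) := by
    conv_lhs => rw [hsum, map_sum]
  have hEN0 : GD.EN F N (fn 0) = 0 := by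
    have h0 : fn 0 = C (coeff 0 f) := homogeneousComponent_zero f
    rw [GD.EN_apply, h0]
    refine Finset.sum_eq_zero fun i _ => ?_
    rw [pderiv_C, GD.iter_eq, map_zero, smul_zero]
  have hENn : ∀ n ∈ Finset.range (T + 1), 1 ≤ n → GD.EN F N (fn n) = 0 := by
    intro n hn h1
    cases n with
    | zero => omega
    | succ m =>
      have h0 : homogeneousComponent m (GD.EN F N f)
          = ∑ k ∈ Finset.range (T + 1), homogeneousComponent m (GD.EN F N (fn k)) := by
        rw [hENsum, map_sum]
      rw [← hEf, hf, map_zero] at h0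
      rw [Finset.sum_eq_single_of_mem (m + 1) hn ?side] at h0
      · rw [homogeneousComponent_of_mem (GD.EN_hom N m (hfnmem (m + 1))), if_pos rfl] at h0
        exact h0.symm
      case side =>
        intro k _ hkne
        cases k with
        | zero => rw [hEN0, map_zero]
        | succ j =>
          rw [homogeneousComponent_of_mem (GD.EN_hom N j (hfnmem (j + 1))), if_neg (by omega)]
  have hfnS : ∀ n ∈ Finset.range (T + 1), 1 ≤ n → fn n ∈ S := by
    intro n hn h1
    have heu : ∑ i ∈ Finset.range N, X i * pderiv i (fn n) = (n : F) • fn n :=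
      GD.euler (hfnmem n) (hN2 n)
    have hmod : (∑ i ∈ Finset.range N, X i * pderiv i (fn n))
        - X 0 * GD.EN F N (fn n) ∈ S := by
      rw [GD.EN_apply, Finset.mul_sum, ← Finset.sum_sub_distrib]
      refine Submodule.sum_mem _ fun i _ => ?_
      rw [mul_smul_comm]
      exact GD.modD i (pderiv i (fn n))
    rw [hENn n hn h1, mul_zero, sub_zero, heu] at hmod
    have hcast : (n : F) ≠ 0 := Nat.cast_ne_zero.mpr (by omega)
    have hres := Submodule.smul_mem S (n : F)⁻¹ hmod
    rwa [smul_smul, inv_mul_cancel₀ hcast, one_smul] at hres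
  have h00 : fn 0 = C (constantCoeff f) := by
    rw [hfn]
    simp only [homogeneousComponent_zero, constantCoeff_eq]
  have hrw : f = (∑ k ∈ Finset.range T, fn (k + 1)) + C (constantCoeff f) := by
    conv_lhs => rw [hsum]
    rw [Finset.sum_range_succ', h00]
  have hdiff : f - C (constantCoeff f) ∈ S := by
    rw [sub_eq_iff_eq_add.mpr hrw]
    refine Submodule.sum_mem _ fun k hk => ?_
    refine hfnS (k + 1) ?_ (by omega)
    rw [Finset.mem_range] at hk ⊢
    omega
  obtain ⟨g, hg⟩ := hdiff
  have hg' : Dx F g = f - C (constantCoeff f) := hg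
  constructor
  · exact ⟨constantCoeff f, g, by rw [hg']; ring⟩
  · intro hc
    refine ⟨g, ?_⟩
    rw [hg', hc, map_zero, sub_zero]
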